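/- Under the same hypotheses, the map λ : C_c(G//K) → ℂ defined by λ(f) = (f ∗ φ)(e) is an algebra homomorphism for the convolution product: λ(f ∗ g) = λ(f)·λ(g) for all K-bi-invariant f, g ∈ C_c(G). -/

import Mathlib

open MeasureTheory Complex

/-- The map `λ(f) = (f ∗ φ)(e)` on K-bi-invariant `f ∈ C_c(G)` is multiplicative for
the convolution product: `λ(f ∗ g) = λ(f)·λ(g)`. -/
theorem sphericalEval_convolution_mul {G : Type*} [Group G] [TopologicalSpace G]
    [IsTopologicalGroup G] [LocallyCompactSpace G] [MeasurableSpace G] [BorelSpace G]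
    (μ : Measure G) [μ.IsHaarMeasure] [μ.IsMulRightInvariant]
    (K : Subgroup G) [CompactSpace K]
    (νK : Measure K) [IsProbabilityMeasure νK] [νK.IsHaarMeasure]
    (φ : G → ℂ) (hφc : Continuous φ) (hφe : φ 1 = 1)
    (hφbi : ∀ (k₁ k₂ : K) (x : G), φ ((k₁ : G) * x * (k₂ : G)) = φ x)
    (hsph : ∀ x y : G, ∫ k : K, φ (x * (k : G) * y) ∂νK = φ x * φ y)
    (f g : G → ℂ)
    (hfc : Continuous f) (hfs : HasCompactSupport f)
    (hgc : Continuous g) (hgs : HasCompactSupport g)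
    (hfK : ∀ (k₁ k₂ : K) (x : G), f ((k₁ : G) * x * (k₂ : G)) = f x)
    (hgK : ∀ (k₁ k₂ : K) (x : G), g ((k₁ : G) * x * (k₂ : G)) = g x) :
    ∫ x, (∫ y, f y * g (y⁻¹ * x) ∂μ) * φ x⁻¹ ∂μ
      = (∫ y, f y * φ y⁻¹ ∂μ) * ∫ y, g y * φ y⁻¹ ∂μ := by
  haveI : OpensMeasurableSpace (↥K) := Subtype.opensMeasurableSpace (K : Set G)
  have hKcpt : IsCompact ((K : Set G)) := by
    simpa [Subtype.range_coe] using isCompact_range (continuous_subtype_val : Continuous ((↑) : K → G))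
  -- key lemma: for every y, ∫ x, g x * φ (x⁻¹ * y⁻¹) = φ y⁻¹ * ∫ x, g x * φ x⁻¹
  have key : ∀ y : G, ∫ x, g x * φ (x⁻¹ * y⁻¹) ∂μ = φ y⁻¹ * ∫ x, g x * φ x⁻¹ ∂μ := by
    intro y
    have hg1 : ∀ (k : K) (x : G), g ((k : G) * x) = g x := fun k x => by
      simpa using hgK k 1 x
    calc ∫ x, g x * φ (x⁻¹ * y⁻¹) ∂μ
        = ∫ x, ∫ k : K, g ((k : G) * x) * φ (x⁻¹ * y⁻¹) ∂νK ∂μ := by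
          refine integral_congr_ae (Filter.Eventually.of_forall fun x => ?_)
          simp [hg1]
      _ = ∫ k : K, ∫ x, g ((k : G) * x) * φ (x⁻¹ * y⁻¹) ∂μ ∂νK := by
          apply integral_integral_swap_of_hasCompactSupport
          · exact (hgc.comp (continuous_subtype_val.comp continuous_snd |>.mul
              continuous_fst)).mul ((hφc.comp (continuous_inv.comp continuous_fst |>.mul
              continuous_const)))
          · apply HasCompactSupport.intro (((hKcpt.inv).mul hgs).prod isCompact_univ)
            rintro ⟨x, k⟩ hx
            simp only [Function.uncurry, Set.mem_prod, Set.mem_univ, and_true] at hx ⊢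
            have : g ((k : G) * x) = 0 := by
              by_contra h
              exact hx ⟨(k : G)⁻¹, by simpa using inv_mem k.2, (k : G) * x,
                subset_tsupport _ h, by group⟩
            simp [this]
      _ = ∫ k : K, ∫ x, g x * φ (x⁻¹ * (k : G) * y⁻¹) ∂μ ∂νK := by
          refine integral_congr_ae (Filter.Eventually.of_forall fun k => ?_)
          show ∫ x, g ((k : G) * x) * φ (x⁻¹ * y⁻¹) ∂μ = ∫ x, g x * φ (x⁻¹ * (k : G) * y⁻¹) ∂μ
          rw [← integral_mul_left_eq_self (fun x => g ((k : G) * x) * φ (x⁻¹ * y⁻¹)) ((k : G)⁻¹)]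
          refine integral_congr_ae (Filter.Eventually.of_forall fun x => ?_)
          have h1 : (k : G) * ((k : G)⁻¹ * x) = x := by group
          have h2 : ((k : G)⁻¹ * x)⁻¹ * y⁻¹ = x⁻¹ * (k : G) * y⁻¹ := by group
          simp only [h1, h2]
      _ = ∫ x, ∫ k : K, g x * φ (x⁻¹ * (k : G) * y⁻¹) ∂νK ∂μ := by
          refine integral_integral_swap_of_hasCompactSupport
            (f := fun (k : K) (x : G) => g x * φ (x⁻¹ * (k : G) * y⁻¹)) ?_ ?_
          · exact (hgc.comp continuous_snd).mul (hφc.comp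
              (((continuous_inv.comp continuous_snd).mul
                (continuous_subtype_val.comp continuous_fst)).mul continuous_const))
          · apply HasCompactSupport.intro (isCompact_univ.prod hgs)
            rintro ⟨k, x⟩ hx
            simp only [Function.uncurry, Set.mem_prod, Set.mem_univ, true_and] at hx ⊢
            have : g x = 0 := by
              by_contra h
              exact hx (subset_tsupport _ h)
            simp [this]
      _ = ∫ x, g x * (φ x⁻¹ * φ y⁻¹) ∂μ := by
          refine integral_congr_ae (Filter.Eventually.of_forall fun x => ?_)
          show ∫ k : K, g x * φ (x⁻¹ * (k : G) * y⁻¹) ∂νK = g x * (φ x⁻¹ * φ y⁻¹)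
          rw [integral_const_mul]
          congr 1
          have := hsph x⁻¹ y⁻¹
          simpa [mul_assoc] using this
      _ = φ y⁻¹ * ∫ x, g x * φ x⁻¹ ∂μ := by
          rw [← integral_const_mul]
          exact integral_congr_ae (Filter.Eventually.of_forall fun x => by ring)
  calc ∫ x, (∫ y, f y * g (y⁻¹ * x) ∂μ) * φ x⁻¹ ∂μ
      = ∫ x, ∫ y, f y * g (y⁻¹ * x) * φ x⁻¹ ∂μ ∂μ := by
        refine integral_congr_ae (Filter.Eventually.of_forall fun x => ?_)
        show (∫ y, f y * g (y⁻¹ * x) ∂μ) * φ x⁻¹ = ∫ y, f y * g (y⁻¹ * x) * φ x⁻¹ ∂μ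
        rw [← integral_mul_const]
    _ = ∫ y, ∫ x, f y * g (y⁻¹ * x) * φ x⁻¹ ∂μ ∂μ := by
        apply integral_integral_swap_of_hasCompactSupport
        · exact ((hfc.comp continuous_snd).mul (hgc.comp
            ((continuous_inv.comp continuous_snd).mul continuous_fst))).mul
            (hφc.comp (continuous_inv.comp continuous_fst))
        · apply HasCompactSupport.intro ((hfs.mul hgs).prod hfs)
          rintro ⟨x, y⟩ hx
          simp only [Function.uncurry, Set.mem_prod] at hx ⊢
          by_cases h : f y = 0
          · simp [h]
          by_cases h2 : g (y⁻¹ * x) = 0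
          · simp [h2]
          exact absurd ⟨⟨y, subset_tsupport _ h, y⁻¹ * x, subset_tsupport _ h2, by group⟩,
            subset_tsupport _ h⟩ hx

    _ = ∫ y, f y * (φ y⁻¹ * ∫ x, g x * φ x⁻¹ ∂μ) ∂μ := by
        refine integral_congr_ae (Filter.Eventually.of_forall fun y => ?_)
        show ∫ x, f y * g (y⁻¹ * x) * φ x⁻¹ ∂μ = f y * (φ y⁻¹ * ∫ x, g x * φ x⁻¹ ∂μ)
        simp_rw [mul_assoc]
        rw [integral_const_mul, ← integral_mul_left_eq_self (fun x => g (y⁻¹ * x) * φ x⁻¹) y,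
          ← key y]
        congr 1
        refine integral_congr_ae (Filter.Eventually.of_forall fun x => ?_)
        have h1 : y⁻¹ * (y * x) = x := by group
        have h2 : (y * x)⁻¹ = x⁻¹ * y⁻¹ := by group
        simp only [h1, h2]
    _ = (∫ y, f y * φ y⁻¹ ∂μ) * ∫ y, g y * φ y⁻¹ ∂μ := by
        rw [← integral_mul_const]
        exact integral_congr_ae (Filter.Eventually.of_forall fun y => by ring)
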